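/- Let B be a d×d complex matrix with B_ii = 1 for all i ∈ [d], and let 𝕁_d be the d×d all-ones matrix. Then for each i ∈ {1,2} the following are equivalent: (a) B is positive semidefinite (i.e. B is a correlation matrix); (b) X^{(i)}_{(𝕁_d, B)} is PPT; (c) X^{(i)}_{(𝕁_d, B)} is separable. -/

import Mathlib

open Matrix Kronecker
open scoped ComplexOrder

/-- The LDOI matrix `X^{(3)}_{(A,B,C)}` associated to a triple of `d × d` matrices. -/
def X3 {d : ℕ} (A B C : Matrix (Fin d) (Fin d) ℂ) :
    Matrix (Fin d × Fin d) (Fin d × Fin d) ℂ :=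
  Matrix.of fun p q =>
    if p.1 = q.1 ∧ p.2 = q.2 then A p.1 p.2
    else if p.1 = p.2 ∧ q.1 = q.2 then B p.1 q.1
    else if p.1 = q.2 ∧ p.2 = q.1 then C p.1 q.1
    else 0

/-- The LDUI matrix `X^{(1)}_{(A,B)} = X^{(3)}_{(A, diag A, B)}`. -/
def X1 {d : ℕ} (A B : Matrix (Fin d) (Fin d) ℂ) :
    Matrix (Fin d × Fin d) (Fin d × Fin d) ℂ :=
  X3 A (Matrix.diagonal fun i => A i i) B

/-- The CLDUI matrix `X^{(2)}_{(A,B)} = X^{(3)}_{(A, B, diag A)}`. -/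
def X2 {d : ℕ} (A B : Matrix (Fin d) (Fin d) ℂ) :
    Matrix (Fin d × Fin d) (Fin d × Fin d) ℂ :=
  X3 A B (Matrix.diagonal fun i => A i i)

/-- A bipartite matrix is separable if it is a finite sum of Kronecker products of
rank-one matrices `v v^*` and `w w^*`. -/
def Separable {d : ℕ} (X : Matrix (Fin d × Fin d) (Fin d × Fin d) ℂ) : Prop :=
  ∃ (n : ℕ) (v w : Fin n → Fin d → ℂ),
    X = ∑ k, (Matrix.vecMulVec (v k) (star (v k))) ⊗ₖ (Matrix.vecMulVec (w k) (star (w k)))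

/-- The partial transpose (on the second factor) of a bipartite matrix:
`⟨ik|X^Γ|jl⟩ = ⟨il|X|jk⟩`. -/
def partialTranspose {d : ℕ} (X : Matrix (Fin d × Fin d) (Fin d × Fin d) ℂ) :
    Matrix (Fin d × Fin d) (Fin d × Fin d) ℂ :=
  Matrix.of fun p q => X (p.1, q.2) (q.1, p.2)

/-- A bipartite matrix is PPT if both it and its partial transpose are
positive semidefinite. -/
def IsPPT {d : ℕ} (X : Matrix (Fin d × Fin d) (Fin d × Fin d) ℂ) : Prop :=
  X.PosSemidef ∧ (partialTranspose X).PosSemidef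

/-- The all-ones matrix `𝕁_d`. -/
def allOnes (d : ℕ) : Matrix (Fin d) (Fin d) ℂ := Matrix.of fun _ _ => 1

/-! ### Auxiliary: cube root of unity and the phase character -/

noncomputable def ωc : ℂ := Complex.exp (2 * Real.pi * Complex.I / 3)

lemma ωc_pow_three : ωc ^ 3 = 1 := by
  have h : ((3:ℕ):ℂ) * (2 * Real.pi * Complex.I / 3) = 2 * Real.pi * Complex.I := by
    push_cast; ring
  rw [ωc, ← Complex.exp_nat_mul, h, Complex.exp_two_pi_mul_I]

lemma ωc_ne_one : ωc ≠ 1 := by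
  intro h
  rw [ωc, Complex.exp_eq_one_iff] at h
  obtain ⟨n, hn⟩ := h
  have hne : (2 * (Real.pi:ℂ) * Complex.I) ≠ 0 := by
    simp [Real.pi_ne_zero, Complex.I_ne_zero, Complex.ofReal_ne_zero]
  have h3 : (1:ℂ) = (n:ℂ) * 3 := by
    refine mul_right_cancel₀ hne ?_
    linear_combination 3 * hn
  have : (1:ℤ) = n * 3 := by exact_mod_cast h3
  omega

lemma ωc_ne_zero : ωc ≠ 0 := Complex.exp_ne_zero _

lemma ωc_sum : 1 + ωc + ωc ^ 2 = 0 := by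
  have h : (ωc - 1) * (1 + ωc + ωc ^ 2) = 0 := by linear_combination ωc_pow_three
  rcases mul_eq_zero.1 h with h' | h'
  · exact absurd (sub_eq_zero.1 h') ωc_ne_one
  · exact h'

lemma conj_ωc_mul : (starRingEnd ℂ) ωc * ωc = 1 := by
  rw [ωc, ← Complex.exp_conj, ← Complex.exp_add]
  have h : (starRingEnd ℂ) (2 * Real.pi * Complex.I / 3) + 2 * Real.pi * Complex.I / 3 = 0 := by
    simp only [map_div₀, _root_.map_mul, Complex.conj_I, Complex.conj_ofReal, map_ofNat]
    ring
  rw [h, Complex.exp_zero]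

noncomputable def ψ3 (t : ZMod 3) : ℂ := ωc ^ t.val

lemma ψ3_zero : ψ3 0 = 1 := by simp [ψ3]

lemma ωc_pow_mod (n : ℕ) : ωc ^ (n % 3) = ωc ^ n := by
  conv_rhs => rw [← Nat.div_add_mod n 3]
  rw [pow_add, pow_mul, ωc_pow_three, one_pow, one_mul]

lemma ψ3_add (a b : ZMod 3) : ψ3 (a + b) = ψ3 a * ψ3 b := by
  rw [ψ3, ψ3, ψ3, ZMod.val_add, ωc_pow_mod, pow_add]

lemma ψ3_ne_zero (a : ZMod 3) : ψ3 a ≠ 0 := pow_ne_zero _ ωc_ne_zero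

lemma conj_ψ3 (a : ZMod 3) : (starRingEnd ℂ) (ψ3 a) = ψ3 (-a) := by
  have h1 : (starRingEnd ℂ) (ψ3 a) * ψ3 a = 1 := by
    rw [ψ3, map_pow, ← mul_pow, conj_ωc_mul, one_pow]
  have h2 : ψ3 (-a) * ψ3 a = 1 := by rw [← ψ3_add, neg_add_cancel, ψ3_zero]
  rw [eq_inv_of_mul_eq_one_left h1, eq_inv_of_mul_eq_one_left h2]

lemma univ_zmod3 : (Finset.univ : Finset (ZMod 3)) = {0, 1, 2} := by decide

lemma ψ3_one : ψ3 1 = ωc := by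
  rw [ψ3, show (1 : ZMod 3).val = 1 from rfl, pow_one]

lemma ψ3_two : ψ3 2 = ωc ^ 2 := by
  rw [ψ3, show (2 : ZMod 3).val = 2 from rfl]

lemma ψ3_sum (c : ZMod 3) : ∑ t : ZMod 3, ψ3 (c * t) = if c = 0 then 3 else 0 := by
  have hexp : ∑ t : ZMod 3, ψ3 (c * t) = ψ3 (c * 0) + (ψ3 (c * 1) + ψ3 (c * 2)) := by
    rw [Finset.sum_congr univ_zmod3 (fun _ _ => rfl),
      show ({0, 1, 2} : Finset (ZMod 3)) = insert 0 (insert 1 ({2} : Finset (ZMod 3))) from rfl,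
      Finset.sum_insert (by decide), Finset.sum_insert (by decide), Finset.sum_singleton]
  have hc : c = 0 ∨ c = 1 ∨ c = 2 := by
    have : ∀ x : ZMod 3, x = 0 ∨ x = 1 ∨ x = 2 := by decide
    exact this c
  rcases hc with rfl | rfl | rfl
  · rw [hexp, if_pos rfl, show ((0:ZMod 3) * 0) = 0 from by decide,
      show ((0:ZMod 3) * 1) = 0 from by decide, show ((0:ZMod 3) * 2) = 0 from by decide, ψ3_zero]
    norm_num
  · rw [hexp, if_neg (by decide)]
    rw [show ((1:ZMod 3) * 0) = 0 from by decide, show ((1:ZMod 3) * 1) = 1 from by decide,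
      show ((1:ZMod 3) * 2) = 2 from by decide, ψ3_zero, ψ3_one, ψ3_two]
    linear_combination ωc_sum
  · rw [hexp, if_neg (by decide)]
    rw [show ((2:ZMod 3) * 0) = 0 from by decide, show ((2:ZMod 3) * 1) = 2 from by decide,
      show ((2:ZMod 3) * 2) = 1 from by decide, ψ3_zero, ψ3_one, ψ3_two]
    linear_combination ωc_sum

lemma ψ3_finsum {α : Type*} (s : Finset α) (f : α → ZMod 3) :
    ψ3 (∑ x ∈ s, f x) = ∏ x ∈ s, ψ3 (f x) := by
  classical
  induction s using Finset.induction_on with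
  | empty => simpa using ψ3_zero
  | insert _ _ h ih => rw [Finset.sum_insert h, Finset.prod_insert h, ψ3_add, ih]

lemma phase_sum {d : ℕ} (e : Fin d → ZMod 3) :
    ∑ t : Fin d → ZMod 3, ψ3 (∑ s, e s * t s) =
      if ∀ s, e s = 0 then (3:ℂ) ^ d else 0 := by
  have h1 : ∀ t : Fin d → ZMod 3, ψ3 (∑ s, e s * t s) = ∏ s, ψ3 (e s * t s) :=
    fun t => ψ3_finsum _ _
  simp_rw [h1]
  rw [← Fintype.prod_sum (κ := fun _ : Fin d => ZMod 3) (f := fun s τ => ψ3 (e s * τ))]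
  simp_rw [ψ3_sum]
  by_cases h : ∀ s, e s = 0
  · rw [if_pos h]
    simp [h]
  · obtain ⟨s, hs⟩ := not_forall.1 h
    rw [if_neg h]
    exact Finset.prod_eq_zero (Finset.mem_univ s) (by simp [hs])

/-! ### The exponent pattern -/

def eG {d : ℕ} (ε : ZMod 3) (i j k l : Fin d) : Fin d → ZMod 3 := fun s =>
  ((if s = i then 1 else 0) - (if s = k then 1 else 0)) +
    ε * ((if s = j then 1 else 0) - (if s = l then 1 else 0))

lemma pair_iff {d : ℕ} (i j k l : Fin d) :
    (∀ s, eG 1 i j k l s = 0) ↔ ((i = k ∧ j = l) ∨ (i = l ∧ j = k)) := by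
  constructor
  · intro h
    by_cases hik : i = k
    · subst hik
      by_cases hjl : j = l
      · exact Or.inl ⟨rfl, hjl⟩
      · exfalso
        have hj := h j
        simp only [eG, one_mul, sub_self, zero_add, if_pos rfl, if_neg hjl, sub_zero] at hj
        exact absurd hj (by decide)
    · right
      have hki : ¬ k = i := fun hh => hik hh.symm
      by_cases hil : i = l
      · by_cases hjk : j = k
        · exact ⟨hil, hjk⟩
        · exfalso
          have hkj : ¬ k = j := fun hh => hjk hh.symm
          have hkl : ¬ k = l := fun hh => hik (hil.trans hh.symm)
          have hk := h k
          simp only [eG, one_mul, if_pos rfl, if_neg hki, if_neg hkj, if_neg hkl] at hk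
          exact absurd hk (by decide)
      · exfalso
        have hi := h i
        by_cases hij : i = j
        · simp only [eG, one_mul, if_pos rfl, if_neg hik, if_neg hil, if_pos hij] at hi
          exact absurd hi (by decide)
        · simp only [eG, one_mul, if_pos rfl, if_neg hik, if_neg hil, if_neg hij] at hi
          exact absurd hi (by decide)
  · rintro (⟨rfl, rfl⟩ | ⟨rfl, rfl⟩) <;> intro s <;> simp only [eG] <;> ring

lemma eG_neg {d : ℕ} (i j k l : Fin d) :
    eG (-1) i j k l = eG 1 i l k j := by
  funext s; simp only [eG]; ring

/-! ### constants -/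

noncomputable def cC (d : ℕ) : ℂ := ((Real.sqrt 3 ^ d : ℝ) : ℂ)⁻¹

lemma cC_conj (d : ℕ) : (starRingEnd ℂ) (cC d) = cC d := by
  rw [cC, map_inv₀, Complex.conj_ofReal]

lemma cC_sq (d : ℕ) : cC d * cC d * (3:ℂ) ^ d = 1 := by
  have hr : (Real.sqrt 3 ^ d) * (Real.sqrt 3 ^ d) = 3 ^ d := by
    rw [← mul_pow, Real.mul_self_sqrt (by norm_num)]
  rw [cC, ← mul_inv, ← Complex.ofReal_mul, hr]
  rw [show ((((3:ℝ) ^ d : ℝ)) : ℂ) = (3:ℂ) ^ d by push_cast; ring]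
  exact inv_mul_cancel₀ (pow_ne_zero _ (by norm_num))

/-! ### The master sum computation -/

lemma master {d : ℕ} (N : Matrix (Fin d) (Fin d) ℂ) (ε : ZMod 3) (i j k l : Fin d) :
    (∑ x : (Fin d → ZMod 3) × Fin d,
      (Matrix.vecMulVec (fun a => ψ3 (x.1 a) * (starRingEnd ℂ) (N x.2 a))
          (star (fun a => ψ3 (x.1 a) * (starRingEnd ℂ) (N x.2 a))) ⊗ₖ
        Matrix.vecMulVec (fun a => cC d * ψ3 (ε * x.1 a))
          (star (fun a => cC d * ψ3 (ε * x.1 a)))) (i, j) (k, l))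
    = (if ∀ s, eG ε i j k l s = 0 then 1 else 0) * (Nᴴ * N) i k := by
  classical
  have hterm : ∀ x : (Fin d → ZMod 3) × Fin d,
      (Matrix.vecMulVec (fun a => ψ3 (x.1 a) * (starRingEnd ℂ) (N x.2 a))
          (star (fun a => ψ3 (x.1 a) * (starRingEnd ℂ) (N x.2 a))) ⊗ₖ
        Matrix.vecMulVec (fun a => cC d * ψ3 (ε * x.1 a))
          (star (fun a => cC d * ψ3 (ε * x.1 a)))) (i, j) (k, l)
      = (cC d * cC d) * ψ3 (∑ s, eG ε i j k l s * x.1 s) *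
          ((starRingEnd ℂ) (N x.2 i) * N x.2 k) := by
    rintro ⟨t, m⟩
    have hsum : (∑ s, eG ε i j k l s * t s) = (t i + -(t k)) + (ε * t j + -(ε * t l)) := by
      have h1 : ∀ a : Fin d, (∑ s, (if s = a then t s else 0)) = t a := by
        intro a
        rw [Finset.sum_ite_eq' Finset.univ a t, if_pos (Finset.mem_univ a)]
      have h2 : ∀ s, eG ε i j k l s * t s =
          (((if s = i then t s else 0) - (if s = k then t s else 0)) +
            (ε * (if s = j then t s else 0) - ε * (if s = l then t s else 0))) := by
        intro s; simp only [eG]; split_ifs <;> ring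
      rw [Finset.sum_congr rfl fun s _ => h2 s, Finset.sum_add_distrib,
        Finset.sum_sub_distrib, Finset.sum_sub_distrib, ← Finset.mul_sum, ← Finset.mul_sum,
        h1, h1, h1, h1]
      ring
    have hψ : ψ3 (∑ s, eG ε i j k l s * t s)
        = ψ3 (t i) * ψ3 (-(t k)) * (ψ3 (ε * t j) * ψ3 (-(ε * t l))) := by
      rw [hsum, ψ3_add, ψ3_add, ψ3_add]
    simp only [Matrix.kroneckerMap_apply, Matrix.vecMulVec_apply, Pi.star_apply]
    rw [hψ]
    simp only [star_mul', Complex.star_def, conj_ψ3, Complex.conj_conj, cC_conj]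
    ring
  rw [Finset.sum_congr rfl (fun x _ => hterm x), Fintype.sum_prod_type]
  simp_rw [← Finset.mul_sum]
  rw [← Finset.sum_mul, ← Finset.mul_sum, phase_sum]
  have hNN : (Nᴴ * N) i k = ∑ m, (starRingEnd ℂ) (N m i) * N m k := by
    rw [Matrix.mul_apply]
    simp [Matrix.conjTranspose_apply]
  rw [hNN]
  by_cases hc : ∀ s, eG ε i j k l s = 0
  · rw [if_pos hc, if_pos hc, cC_sq]
  · rw [if_neg hc, if_neg hc]
    ring

/-! ### Separability from an arbitrary finite index type -/

lemma separable_of_fun {d : ℕ} {X : Matrix (Fin d × Fin d) (Fin d × Fin d) ℂ}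
    {ι : Type} [Fintype ι] (V W : ι → Fin d → ℂ)
    (h : X = ∑ x : ι, Matrix.vecMulVec (V x) (star (V x)) ⊗ₖ
        Matrix.vecMulVec (W x) (star (W x))) :
    Separable X := by
  classical
  let e := Fintype.equivFin ι
  refine ⟨Fintype.card ι, V ∘ e.symm, W ∘ e.symm, ?_⟩
  rw [h]
  exact (Equiv.sum_comp e.symm fun x =>
    Matrix.vecMulVec (V x) (star (V x)) ⊗ₖ Matrix.vecMulVec (W x) (star (W x))).symm

/-! ### (a) → (c) -/

lemma X1_sep {d : ℕ} (B N : Matrix (Fin d) (Fin d) ℂ) (hB : B = Nᴴ * N)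
    (hdiag : ∀ i, B i i = 1) : Separable (X1 (allOnes d) B) := by
  classical
  refine separable_of_fun (ι := (Fin d → ZMod 3) × Fin d)
    (fun x => fun a => ψ3 (x.1 a) * (starRingEnd ℂ) (N x.2 a))
    (fun x => fun a => cC d * ψ3 ((1 : ZMod 3) * x.1 a)) ?_
  ext ⟨i, j⟩ ⟨k, l⟩
  rw [Matrix.sum_apply, master N 1 i j k l, ← hB]
  rw [if_congr (pair_iff i j k l) rfl rfl]
  by_cases h1 : i = k ∧ j = l
  · obtain ⟨rfl, rfl⟩ := h1
    rw [if_pos (Or.inl ⟨rfl, rfl⟩), one_mul]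
    simp [X1, X3, allOnes, hdiag]
  · by_cases h2 : i = l ∧ j = k
    · obtain ⟨rfl, rfl⟩ := h2
      rw [if_pos (Or.inr ⟨rfl, rfl⟩), one_mul]
      have hij : ¬ (i = j) := fun hij => h1 ⟨hij, hij.symm⟩
      simp [X1, X3, hij]
    · rw [if_neg (by tauto), zero_mul]
      simp only [X1, X3, Matrix.of_apply]
      rw [if_neg (by exact fun hc => h1 hc)]
      by_cases h3 : i = j ∧ k = l
      · rw [if_pos h3, Matrix.diagonal_apply_ne]
        intro hik
        exact h1 ⟨hik, by rw [← h3.1, ← h3.2]; exact hik⟩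
      · rw [if_neg h3, if_neg (by exact fun hc => h2 hc)]

lemma X2_sep {d : ℕ} (B N : Matrix (Fin d) (Fin d) ℂ) (hB : B = Nᴴ * N)
    (hdiag : ∀ i, B i i = 1) : Separable (X2 (allOnes d) B) := by
  classical
  refine separable_of_fun (ι := (Fin d → ZMod 3) × Fin d)
    (fun x => fun a => ψ3 (x.1 a) * (starRingEnd ℂ) (N x.2 a))
    (fun x => fun a => cC d * ψ3 ((-1 : ZMod 3) * x.1 a)) ?_
  ext ⟨i, j⟩ ⟨k, l⟩
  rw [Matrix.sum_apply, master N (-1) i j k l, ← hB, eG_neg]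
  rw [if_congr (pair_iff i l k j) rfl rfl]
  by_cases h1 : i = k ∧ j = l
  · obtain ⟨rfl, rfl⟩ := h1
    rw [if_pos (Or.inl ⟨rfl, rfl⟩), one_mul]
    simp [X2, X3, allOnes, hdiag]
  · by_cases h2 : i = j ∧ k = l
    · obtain ⟨rfl, rfl⟩ := h2
      rw [if_pos (Or.inr ⟨rfl, rfl⟩), one_mul]
      have hik : ¬ (i = k) := fun hik => h1 ⟨hik, hik⟩
      simp [X2, X3, hik]
    · rw [if_neg (by rintro (⟨a, b⟩ | ⟨a, b⟩); exacts [h1 ⟨a, b.symm⟩, h2 ⟨a, b.symm⟩]),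
        zero_mul]
      simp only [X2, X3, Matrix.of_apply]
      rw [if_neg (by exact fun hc => h1 hc), if_neg (by exact fun hc => h2 hc)]
      by_cases h3 : i = l ∧ j = k
      · rw [if_pos h3, Matrix.diagonal_apply_ne]
        intro hik
        exact h2 ⟨hik.trans h3.2.symm, hik.symm.trans h3.1⟩
      · rw [if_neg h3]

/-! ### (c) → (b) -/

lemma sum_outer_posSemidef {m : Type*} [Fintype m] [DecidableEq m] (n : ℕ)
    (u : Fin n → m → ℂ) :
    (∑ k, Matrix.vecMulVec (u k) (star (u k))).PosSemidef := by
  have h : (∑ k, Matrix.vecMulVec (u k) (star (u k)))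
      = (Matrix.of fun (k : Fin n) (p : m) => star (u k p))ᴴ *
          (Matrix.of fun (k : Fin n) (p : m) => star (u k p)) := by
    ext p q
    simp [Matrix.mul_apply, Matrix.sum_apply, Matrix.vecMulVec_apply,
      Matrix.conjTranspose_apply, mul_comm]
  rw [h]
  exact Matrix.posSemidef_conjTranspose_mul_self _

lemma separable_isPPT {d : ℕ} {X : Matrix (Fin d × Fin d) (Fin d × Fin d) ℂ}
    (h : Separable X) : IsPPT X := by
  obtain ⟨n, v, w, rfl⟩ := h
  constructor
  · have h1 : (∑ k, Matrix.vecMulVec (v k) (star (v k)) ⊗ₖ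
        Matrix.vecMulVec (w k) (star (w k)))
        = ∑ k, Matrix.vecMulVec (fun p : Fin d × Fin d => v k p.1 * w k p.2)
            (star fun p : Fin d × Fin d => v k p.1 * w k p.2) := by
      refine Finset.sum_congr rfl fun k _ => ?_
      ext ⟨i, j⟩ ⟨a, b⟩
      simp only [Matrix.kroneckerMap_apply, Matrix.vecMulVec_apply, Pi.star_apply, star_mul']
      ring
    rw [h1]
    exact sum_outer_posSemidef _ _
  · have h2 : partialTranspose (∑ k, Matrix.vecMulVec (v k) (star (v k)) ⊗ₖ
        Matrix.vecMulVec (w k) (star (w k)))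
        = ∑ k, Matrix.vecMulVec (fun p : Fin d × Fin d => v k p.1 * star (w k p.2))
            (star fun p : Fin d × Fin d => v k p.1 * star (w k p.2)) := by
      ext ⟨i, j⟩ ⟨a, b⟩
      simp only [partialTranspose, Matrix.of_apply, Matrix.sum_apply,
        Matrix.kroneckerMap_apply, Matrix.vecMulVec_apply, Pi.star_apply, star_mul', star_star]
      refine Finset.sum_congr rfl fun k _ => ?_
      ring
    rw [h2]
    exact sum_outer_posSemidef _ _

/-! ### (b) → (a) -/

lemma compress_psd {d : ℕ} {X : Matrix (Fin d × Fin d) (Fin d × Fin d) ℂ}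
    (hX : X.PosSemidef) :
    (Matrix.of fun i j : Fin d => X (i, i) (j, j)).PosSemidef := by
  refine Matrix.PosSemidef.of_dotProduct_mulVec_nonneg ?_ ?_
  · ext i j
    rw [Matrix.conjTranspose_apply, Matrix.of_apply, Matrix.of_apply]
    rw [hX.1.apply]
  · intro x
    have hq := hX.dotProduct_mulVec_nonneg (fun p : Fin d × Fin d => if p.1 = p.2 then x p.1 else 0)
    have hform : (star (fun p : Fin d × Fin d => if p.1 = p.2 then x p.1 else 0)) ⬝ᵥ
        (X *ᵥ fun p : Fin d × Fin d => if p.1 = p.2 then x p.1 else 0)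
        = (star x) ⬝ᵥ ((Matrix.of fun i j : Fin d => X (i, i) (j, j)) *ᵥ x) := by
      simp only [dotProduct, Matrix.mulVec, Pi.star_apply, Matrix.of_apply,
        Complex.star_def]
      rw [Fintype.sum_prod_type]
      simp only [Fintype.sum_prod_type, apply_ite (starRingEnd ℂ), map_zero, ite_mul,
        zero_mul, mul_ite, mul_zero, Finset.sum_ite_eq, Finset.sum_ite_eq',
        Finset.mem_univ, if_true]
    rwa [hform] at hq

lemma ppt_X1_psd {d : ℕ} {B : Matrix (Fin d) (Fin d) ℂ} (hdiag : ∀ i, B i i = 1)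
    (h : IsPPT (X1 (allOnes d) B)) : B.PosSemidef := by
  have h2 := compress_psd h.2
  have hEq : (Matrix.of fun i j : Fin d =>
      (partialTranspose (X1 (allOnes d) B)) (i, i) (j, j)) = B := by
    ext i j
    simp only [Matrix.of_apply, partialTranspose, X1, X3]
    by_cases hij : i = j
    · subst hij
      simp [allOnes, hdiag]
    · simp [hij]
  rwa [hEq] at h2

lemma ppt_X2_psd {d : ℕ} {B : Matrix (Fin d) (Fin d) ℂ} (hdiag : ∀ i, B i i = 1)
    (h : IsPPT (X2 (allOnes d) B)) : B.PosSemidef := by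
  have h2 := compress_psd h.1
  have hEq : (Matrix.of fun i j : Fin d => (X2 (allOnes d) B) (i, i) (j, j)) = B := by
    ext i j
    simp only [Matrix.of_apply, X2, X3]
    by_cases hij : i = j
    · subst hij
      simp [allOnes, hdiag]
    · simp [hij]
  rwa [hEq] at h2

section
open scoped MatrixOrder

lemma psd_exists_eq_conjTranspose_mul_self {d : ℕ} {B : Matrix (Fin d) (Fin d) ℂ}
    (h : B.PosSemidef) : ∃ N : Matrix (Fin d) (Fin d) ℂ, B = Nᴴ * N :=
  CStarAlgebra.nonneg_iff_eq_star_mul_self.mp h.nonneg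

end

theorem stmt10 {d : ℕ} (B : Matrix (Fin d) (Fin d) ℂ)
    (hdiag : ∀ i, B i i = 1) :
    [B.PosSemidef, IsPPT (X1 (allOnes d) B), Separable (X1 (allOnes d) B)].TFAE ∧
    [B.PosSemidef, IsPPT (X2 (allOnes d) B), Separable (X2 (allOnes d) B)].TFAE := by
  constructor
  · tfae_have 1 → 3 := by
      intro h
      obtain ⟨N, hN⟩ := psd_exists_eq_conjTranspose_mul_self h
      exact X1_sep B N hN hdiag
    tfae_have 3 → 2 := separable_isPPT
    tfae_have 2 → 1 := ppt_X1_psd hdiag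
    tfae_finish
  · tfae_have 1 → 3 := by
      intro h
      obtain ⟨N, hN⟩ := psd_exists_eq_conjTranspose_mul_self h
      exact X2_sep B N hN hdiag
    tfae_have 3 → 2 := separable_isPPT
    tfae_have 2 → 1 := ppt_X2_psd hdiag
    tfae_finish
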